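/- For a continuous loop α generating π₁(SL(2,ℝ)), represented by t ↦ rotation by angle 2πt (t ∈ [0,1]), the Maslov index satisfies μ(α · c) = 2ρ(α) + μ(c) for any continuous path c : [0,1] → SL(2,ℝ) with c(0) = Id, where ρ : π₁(SL(2,ℝ)) → ℤ is the natural isomorphism. In particular μ of the standard full rotation loop equals 2. -/
import Mathlib


/-!
STATEMENT 7: For the loop α generating π₁(SL(2,ℝ)) represented by
t ↦ rotation by angle 2πt, and more generally for its k-th power (ρ(α) = k for the
k-fold rotation loop, ρ : π₁(SL(2,ℝ)) ≅ ℤ the natural isomorphism), the Maslov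
index satisfies μ(α^k · c) = 2k + μ(c) for any continuous path c : [0,1] → SL(2,ℝ)
with c(0) = Id. In particular the Maslov index of the standard full rotation loop
equals 2.
-/

noncomputable def enorm2 (v : Fin 2 → ℝ) : ℝ := Real.sqrt (v 0 ^ 2 + v 1 ^ 2)

noncomputable def IsRotLift (c : ℝ → Matrix (Fin 2) (Fin 2) ℝ) (χ : ℝ)
    (X : Fin 2 → ℝ) (θ : ℝ → ℝ) : Prop :=
  ContinuousOn θ (Set.Icc 0 χ) ∧
  ∀ t ∈ Set.Icc (0 : ℝ) χ,
    (c t).mulVec X = enorm2 ((c t).mulVec X) • ![Real.cos (θ t), Real.sin (θ t)]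

noncomputable def MaslovIs (c : ℝ → Matrix (Fin 2) (Fin 2) ℝ) (χ : ℝ) (μ : ℤ) : Prop :=
  (∃ p : ℤ, μ = 2 * p + 1 ∧
    ∀ X : Fin 2 → ℝ, enorm2 X = 1 → ∀ θ : ℝ → ℝ, IsRotLift c χ X θ →
      θ χ - θ 0 ∈ Set.Ioo (2 * (p : ℝ) * Real.pi) (2 * ((p : ℝ) + 1) * Real.pi)) ∨
  (∃ p : ℤ, μ = 2 * p ∧
    ∃ X : Fin 2 → ℝ, enorm2 X = 1 ∧ ∃ θ : ℝ → ℝ, IsRotLift c χ X θ ∧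
      θ χ - θ 0 = 2 * (p : ℝ) * Real.pi)

/-- Rotation matrix by angle θ. -/
noncomputable def rotMat (θ : ℝ) : Matrix (Fin 2) (Fin 2) ℝ :=
  !![Real.cos θ, -Real.sin θ; Real.sin θ, Real.cos θ]

lemma rotMat_mulVec (φ : ℝ) (v : Fin 2 → ℝ) :
    (rotMat φ).mulVec v = ![Real.cos φ * v 0 - Real.sin φ * v 1,
      Real.sin φ * v 0 + Real.cos φ * v 1] := by
  funext i; fin_cases i <;>
    simp [rotMat, Matrix.mulVec, dotProduct, Fin.sum_univ_two] <;> ring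

lemma enorm2_rotMat_mulVec (φ : ℝ) (v : Fin 2 → ℝ) :
    enorm2 ((rotMat φ).mulVec v) = enorm2 v := by
  rw [rotMat_mulVec]; unfold enorm2
  congr 1
  simp only [Matrix.cons_val_zero, Matrix.cons_val_one, Matrix.head_cons]
  linear_combination (v 0 ^ 2 + v 1 ^ 2) * (Real.sin_sq_add_cos_sq φ)

lemma rotMat_smul_cs (φ r θ : ℝ) :
    (rotMat φ).mulVec (r • ![Real.cos θ, Real.sin θ]) =
      r • ![Real.cos (θ + φ), Real.sin (θ + φ)] := by
  rw [rotMat_mulVec]; funext i; fin_cases i <;>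
    simp [Real.cos_add, Real.sin_add] <;> ring

lemma rotMat_mul (x y : ℝ) : rotMat x * rotMat y = rotMat (x + y) := by
  ext i j; fin_cases i <;> fin_cases j <;>
    simp [rotMat, Matrix.mul_apply, Fin.sum_univ_two, Real.cos_add, Real.sin_add] <;> ring

lemma rotMat_zero : rotMat 0 = 1 := by
  ext i j; fin_cases i <;> fin_cases j <;> simp [rotMat, Matrix.one_apply]

lemma lift_shift (d : ℝ → Matrix (Fin 2) (Fin 2) ℝ) (χ a : ℝ) (X : Fin 2 → ℝ)
    (θ : ℝ → ℝ) (h : IsRotLift d χ X θ) :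
    IsRotLift (fun t => rotMat (a * t) * d t) χ X (fun t => θ t + a * t) := by
  obtain ⟨hθ, hv⟩ := h
  constructor
  · exact hθ.add ((continuous_const.mul continuous_id).continuousOn)
  · intro t ht
    have hv' := hv t ht
    simp only
    rw [← Matrix.mulVec_mulVec, enorm2_rotMat_mulVec, hv', rotMat_smul_cs, ← hv']

lemma IsRotLift_congr {c c' : ℝ → Matrix (Fin 2) (Fin 2) ℝ} {χ : ℝ} {X : Fin 2 → ℝ}
    {θ : ℝ → ℝ} (hcc : ∀ t ∈ Set.Icc (0:ℝ) χ, c t = c' t) (h : IsRotLift c χ X θ) :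
    IsRotLift c' χ X θ := by
  obtain ⟨hθ, hv⟩ := h
  exact ⟨hθ, fun t ht => by rw [← hcc t ht]; exact hv t ht⟩

theorem stmt7 (k : ℤ) (c : ℝ → Matrix (Fin 2) (Fin 2) ℝ)
    (hcont : ContinuousOn c (Set.Icc 0 1))
    (hc0 : c 0 = 1)
    (hdet : ∀ t ∈ Set.Icc (0 : ℝ) 1, (c t).det = 1)
    (μ : ℤ) (hμ : MaslovIs c 1 μ) :
    -- μ(α·c) = 2ρ(α) + μ(c) for α the k-fold rotation loop (ρ(α) = k)
    MaslovIs (fun t => rotMat (2 * Real.pi * (k : ℝ) * t) * c t) 1 (2 * k + μ) ∧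
    -- μ of the standard full rotation loop equals 2
    MaslovIs (fun t => rotMat (2 * Real.pi * t)) 1 2 := by
  have hπ := Real.pi_pos
  constructor
  · rcases hμ with ⟨p, hp, H⟩ | ⟨p, hp, X, hX, θ, hlift, hΔ⟩
    · left
      refine ⟨p + k, by omega, ?_⟩
      intro X hX θ' hθ'
      -- unshift: θ' - 2πk t is a lift of c
      have h1 : IsRotLift
          (fun t => rotMat (-(2 * Real.pi * (k : ℝ)) * t) *
            (rotMat (2 * Real.pi * (k : ℝ) * t) * c t)) 1 X
          (fun t => θ' t + -(2 * Real.pi * (k : ℝ)) * t) :=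
        lift_shift _ 1 _ X θ' hθ'
      have h2 : IsRotLift c 1 X (fun t => θ' t + -(2 * Real.pi * (k : ℝ)) * t) := by
        refine IsRotLift_congr (fun t ht => ?_) h1
        rw [← mul_assoc, rotMat_mul]
        rw [show -(2 * Real.pi * (k : ℝ)) * t + 2 * Real.pi * (k : ℝ) * t = 0 by ring,
          rotMat_zero, one_mul]
      have := H X hX _ h2
      simp only [Set.mem_Ioo] at this ⊢
      push_cast at this ⊢
      constructor <;> nlinarith [this.1, this.2]
    · right
      refine ⟨p + k, by omega, X, hX, fun t => θ t + 2 * Real.pi * (k : ℝ) * t, ?_, ?_⟩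
      · exact lift_shift c 1 (2 * Real.pi * (k : ℝ)) X θ hlift
      · push_cast
        nlinarith [hΔ]
  · right
    refine ⟨1, by norm_num, ![1, 0], ?_, fun t => 2 * Real.pi * t, ⟨?_, ?_⟩, ?_⟩
    · simp [enorm2]
    · exact (continuous_const.mul continuous_id).continuousOn
    · intro t ht
      rw [rotMat_mulVec]
      simp only [Matrix.cons_val_zero, Matrix.cons_val_one, Matrix.head_cons,
        mul_one, mul_zero, sub_zero, add_zero]
      have : enorm2 ![Real.cos (2 * Real.pi * t), Real.sin (2 * Real.pi * t)] = 1 := by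
        simp [enorm2]
      rw [this, one_smul]
    · push_cast; ring
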